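/- If a social ranking function ξ satisfies Independence from the worst set and Pareto-efficiency, and τ is an extension-ranking semantics satisfying σ-generalisation (the maximal elements of ⊒^τ_F are exactly the σ-extensions) for a semantics σ with σ(F) ≠ ∅ and with all σ-extensions having rank 1 under τ, then the induced argument ranking ξ_τ satisfies σ-Compatibility: every credulously accepted argument is ranked strictly above every rejected argument. -/

import Mathlib

/-- Strict part of a relation on sets of elements. -/
def strictPart {α : Type*} (r : Finset α → Finset α → Prop) (X Y : Finset α) : Prop :=
  r X Y ∧ ¬ r Y X

/-- There is a strict chain `X₁ ⊐ X₂ ⊐ ⋯ ⊐ Xₙ ⊐ X` of length `n` above `X`. -/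
def ChainAbove {α : Type*} (r : Finset α → Finset α → Prop) (X : Finset α) (n : ℕ) : Prop :=
  ∃ l : List (Finset α), l.length = n ∧ List.Chain' (strictPart r) (l ++ [X])

/-- The rank of a set: one plus the maximal length of a strict chain above it. -/
noncomputable def rank {α : Type*} (r : Finset α → Finset α → Prop) (X : Finset α) : ℕ :=
  sSup {n | ChainAbove r X n} + 1
/-- Strict part of a preorder on elements. -/
def sp {β : Type*} (p : β → β → Prop) (x y : β) : Prop := p x y ∧ ¬ p y x

/-- A social ranking function maps rankings over sets to rankings over elements. -/
def SRF (α : Type*) := (Finset α → Finset α → Prop) → α → α → Prop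

/-- Maximal rank of any set under `r`. -/
noncomputable def maxRank {α : Type*} (r : Finset α → Finset α → Prop) : ℕ :=
  sSup (Set.range (rank r))

/-- Pareto-efficiency of a social ranking function. -/
def ParetoEfficient {α : Type*} [DecidableEq α] (ξ : SRF α) : Prop :=
  ∀ r : Finset α → Finset α → Prop, ∀ x y : α,
    (∀ Z : Finset α, x ∉ Z → y ∉ Z → rank r (insert x Z) ≤ rank r (insert y Z)) →
    (∃ Z : Finset α, x ∉ Z ∧ y ∉ Z ∧ rank r (insert x Z) < rank r (insert y Z)) →
    sp (ξ r) x y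

/-- Independence from the worst set. -/
def IndepWorstSet {α : Type*} (ξ : SRF α) : Prop :=
  ∀ r r' : Finset α → Finset α → Prop,
    (∀ X : Finset α, rank r X < maxRank r → rank r' X = rank r X) →
    (∀ X : Finset α, rank r X = maxRank r → maxRank r ≤ rank r' X) →
    ∀ x y : α, sp (ξ r) x y → sp (ξ r') x y

/-- Dominating set axiom. -/
def DominatingSet {α : Type*} (ξ : SRF α) : Prop :=
  ∀ r : Finset α → Finset α → Prop, ∀ x y : α,
    (∃ X : Finset α, x ∈ X ∧ ∀ Y : Finset α, y ∈ Y → strictPart r X Y) →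
    sp (ξ r) x y

section Aux
variable {α : Type*} [DecidableEq α]

private lemma rnk_pos {α : Type*} (r : Finset α → Finset α → Prop) (X : Finset α) :
    1 ≤ rank r X := by unfold rank; omega

theorem stmt16' {α : Type*} [Fintype α] [DecidableEq α] (ξ : SRF α)
    (hI : IndepWorstSet ξ) (hP : ParetoEfficient ξ)
    (r : Finset α → Finset α → Prop)
    (ext : Set (Finset α)) (hne : ext.Nonempty)
    (hgen : ∀ E : Finset α, rank r E = 1 ↔ E ∈ ext)
    (x y : α) (hx : ∃ E ∈ ext, x ∈ E) (hy : ∀ E ∈ ext, y ∉ E) :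
    sp (ξ r) x y := by
  classical
  set r0 : Finset α → Finset α → Prop := fun X Y => X ∈ ext ∨ Y ∉ ext with hr0
  have hsp : ∀ X Y : Finset α, strictPart r0 X Y ↔ X ∈ ext ∧ Y ∉ ext := by
    intro X Y; simp only [strictPart, hr0]; tauto
  have hchain0 : ∀ X : Finset α, ChainAbove r0 X 0 := fun X => ⟨[], rfl, List.isChain_singleton X⟩
  -- if a nonempty chain sits above X, then X ∉ ext
  have hlast : ∀ (X : Finset α) (n : ℕ), ChainAbove r0 X n → n ≠ 0 → X ∉ ext := by
    rintro X n ⟨l, hl, hc⟩ hn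
    simp only [List.Chain'] at hc
    rw [List.isChain_append] at hc
    rcases l with _ | ⟨a, t⟩
    · simp at hl; omega
    · have hg : ∃ z, (a :: t).getLast? = some z := by
        cases t with
        | nil => exact ⟨a, rfl⟩
        | cons b t' => exact ⟨_, rfl⟩
      obtain ⟨z, hz⟩ := hg
      have := hc.2.2 z hz X (by simp)
      exact ((hsp z X).1 this).2
  -- chains have length at most 1
  have hle1 : ∀ (X : Finset α) (n : ℕ), ChainAbove r0 X n → n ≤ 1 := by
    rintro X n ⟨l, hl, hc⟩
    by_contra h
    push_neg at h
    rcases l with _ | ⟨a, l⟩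
    · simp at hl; omega
    rcases l with _ | ⟨b, t⟩
    · simp at hl; omega
    simp only [List.Chain'] at hc
    rw [List.cons_append, List.cons_append, List.isChain_cons_cons] at hc
    obtain ⟨hab, hc⟩ := hc
    have hbc : ∃ c rest, t ++ [X] = c :: rest := by
      cases t with
      | nil => exact ⟨X, [], rfl⟩
      | cons c t' => exact ⟨c, _, rfl⟩
    obtain ⟨c, rest, hcr⟩ := hbc
    rw [hcr, List.isChain_cons_cons] at hc
    exact ((hsp a b).1 hab).2 ((hsp b c).1 hc.1).1
  have hrank_mem : ∀ X ∈ ext, rank r0 X = 1 := by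
    intro X hX
    have hset : {n | ChainAbove r0 X n} = {0} := by
      ext n
      simp only [Set.mem_setOf_eq, Set.mem_singleton_iff]
      constructor
      · intro h
        by_contra hn
        exact hlast X n h hn hX
      · rintro rfl; exact hchain0 X
    rw [rank, hset, csSup_singleton]
  have hrank_not : ∀ X : Finset α, X ∉ ext → rank r0 X = 2 := by
    intro X hX
    obtain ⟨E, hE⟩ := hne
    have hset : {n | ChainAbove r0 X n} = {0, 1} := by
      ext n
      simp only [Set.mem_setOf_eq, Set.mem_insert_iff, Set.mem_singleton_iff]
      constructor
      · intro h
        have := hle1 X n h; omega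
      · rintro (rfl | rfl)
        · exact hchain0 X
        · refine ⟨[E], rfl, ?_⟩
          simp only [List.cons_append, List.nil_append, List.Chain', List.isChain_cons_cons,
            List.isChain_singleton, and_true]
          exact (hsp E X).2 ⟨hE, hX⟩
    rw [rank, hset]
    have : sSup ({0, 1} : Set ℕ) = 1 := by
      apply le_antisymm
      · exact csSup_le ⟨0, by simp⟩ (by rintro n (rfl | rfl) <;> simp)
      · exact le_csSup ⟨1, by rintro n (rfl | rfl) <;> simp⟩ (by simp)
    omega
  have hyext : ∀ Z : Finset α, y ∈ Z → Z ∉ ext := fun Z hZ hmem => hy Z hmem hZ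
  have hbound : ∀ X : Finset α, rank r0 X ≤ 2 := by
    intro X
    by_cases hX : X ∈ ext
    · rw [hrank_mem X hX]; omega
    · rw [hrank_not X hX]
  have hmax : maxRank r0 = 2 := by
    rw [maxRank]
    apply le_antisymm
    · exact csSup_le ⟨rank r0 ∅, ⟨∅, rfl⟩⟩ (by rintro n ⟨X, rfl⟩; exact hbound X)
    · exact le_csSup ⟨2, by rintro n ⟨X, rfl⟩; exact hbound X⟩
        ⟨{y}, hrank_not {y} (hyext {y} (Finset.mem_singleton_self y))⟩
  -- Pareto gives sp (ξ r0) x y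
  have hP0 : sp (ξ r0) x y := by
    apply hP r0 x y
    · intro Z hxZ hyZ
      rw [hrank_not _ (hyext _ (Finset.mem_insert_self y Z))]
      by_cases h : insert x Z ∈ ext
      · rw [hrank_mem _ h]; omega
      · rw [hrank_not _ h]
    · obtain ⟨E, hE, hxE⟩ := hx
      refine ⟨E.erase x, Finset.notMem_erase x E, ?_, ?_⟩
      · intro hyE
        exact hy E hE (Finset.mem_of_mem_erase hyE)
      · rw [Finset.insert_erase hxE, hrank_mem E hE,
          hrank_not _ (hyext _ (Finset.mem_insert_self y _))]
        omega
  -- transfer to r via independence from the worst set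
  apply hI r0 r _ _ x y hP0
  · intro X hX
    rw [hmax] at hX
    have hXext : X ∈ ext := by
      by_contra h
      rw [hrank_not X h] at hX; omega
    rw [hrank_mem X hXext, (hgen X).2 hXext]
  · intro X hX
    rw [hmax] at hX ⊢
    have hXext : X ∉ ext := by
      intro h
      rw [hrank_mem X h] at hX; omega
    have h1 := rnk_pos r X
    have h2 : rank r X ≠ 1 := fun h => hXext ((hgen X).1 h)
    omega

end Aux

/-- if `ξ` satisfies Independence from the worst set and
Pareto-efficiency and the extension ranking `r` satisfies σ-generalisation (the
rank-1 sets are exactly the σ-extensions), then the induced argument ranking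
satisfies σ-Compatibility. -/
theorem stmt16 {α : Type*} [Fintype α] [DecidableEq α] (ξ : SRF α)
    (hI : IndepWorstSet ξ) (hP : ParetoEfficient ξ)
    (r : Finset α → Finset α → Prop)
    (ext : Set (Finset α)) (hne : ext.Nonempty)
    (hgen : ∀ E : Finset α, rank r E = 1 ↔ E ∈ ext)
    (x y : α) (hx : ∃ E ∈ ext, x ∈ E) (hy : ∀ E ∈ ext, y ∉ E) :
    sp (ξ r) x y := by
  exact stmt16' ξ hI hP r ext hne hgen x y hx hy
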